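/- arXiv:2308.10502 — 3 statements merged into one kernel-verified Lean document; each statement's English description precedes it below -/
import Mathlib

section
/- Fix i ∈ [d²]. The partial derivative of L_exp(x) with respect to the coordinate x_i equals Σ_{j1=1}^{n} ( ⟨c(x)_{j1}, f(x)_{j1} ∘ 𝖠_{[j1],i}⟩ − ⟨c(x)_{j1}, f(x)_{j1}⟩ · ⟨f(x)_{j1}, 𝖠_{[j1],i}⟩ ). -/
open Matrix Kronecker

noncomputable section

/-- The `i`-th column of the block `𝖠_{[j1]} ∈ ℝ^{n × d²}` of `𝖠 = A1 ⊗ A2`: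
`(𝖠_{[j1],i})_{i2} = 𝖠_{(j1,i2), i}`. -/
def Acol {n d : ℕ} (A1 A2 : Matrix (Fin n) (Fin d) ℝ) (j1 : Fin n)
    (i : Fin d × Fin d) : Fin n → ℝ :=
  fun i2 => (A1 ⊗ₖ A2) (j1, i2) i

/-- `u(x)_{j1} = exp(𝖠_{[j1]} x) ∈ ℝⁿ` (entrywise `exp`), for `𝖠 = A1 ⊗ A2`. -/
def uvec {n d : ℕ} (A1 A2 : Matrix (Fin n) (Fin d) ℝ) (j1 : Fin n)
    (x : Fin d × Fin d → ℝ) : Fin n → ℝ :=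
  fun i2 => Real.exp (∑ q : Fin d × Fin d, (A1 ⊗ₖ A2) (j1, i2) q * x q)

/-- `α(x)_{j1} = ⟨exp(𝖠_{[j1]} x), 1_n⟩`. -/
def alphaval {n d : ℕ} (A1 A2 : Matrix (Fin n) (Fin d) ℝ) (j1 : Fin n)
    (x : Fin d × Fin d → ℝ) : ℝ :=
  ∑ i2 : Fin n, uvec A1 A2 j1 x i2

/-- `f(x)_{j1} = α(x)_{j1}⁻¹ · u(x)_{j1} ∈ ℝⁿ`. -/
def fvec {n d : ℕ} (A1 A2 : Matrix (Fin n) (Fin d) ℝ) (j1 : Fin n)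
    (x : Fin d × Fin d → ℝ) : Fin n → ℝ :=
  fun i2 => (alphaval A1 A2 j1 x)⁻¹ * uvec A1 A2 j1 x i2

/-- `c(x)_{j1} = f(x)_{j1} − b_{[j1]} ∈ ℝⁿ`, where `b ∈ ℝ^{n²}` has blocks
`(b_{[j1]})_{i2} = b (j1, i2)`. -/
def cvec {n d : ℕ} (A1 A2 : Matrix (Fin n) (Fin d) ℝ) (b : Fin n × Fin n → ℝ)
    (j1 : Fin n) (x : Fin d × Fin d → ℝ) : Fin n → ℝ :=
  fun i2 => fvec A1 A2 j1 x i2 - b (j1, i2)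

/-- `L_exp(x) = ∑_{j1} 0.5 ‖c(x)_{j1}‖₂²`. -/
def Lexp {n d : ℕ} (A1 A2 : Matrix (Fin n) (Fin d) ℝ) (b : Fin n × Fin n → ℝ)
    (x : Fin d × Fin d → ℝ) : ℝ :=
  ∑ j1 : Fin n, 0.5 * ∑ i2 : Fin n, (cvec A1 A2 b j1 x i2) ^ 2

/-! ### Auxiliary machinery -/

/-- The continuous linear map `v ↦ ∑ q, 𝖠_{(j1,i2),q} v_q`. -/
def linmap {n d : ℕ} (A1 A2 : Matrix (Fin n) (Fin d) ℝ) (j1 i2 : Fin n) :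
    (Fin d × Fin d → ℝ) →L[ℝ] ℝ :=
  ∑ q : Fin d × Fin d, (A1 ⊗ₖ A2) (j1, i2) q • ContinuousLinearMap.proj q

lemma linmap_apply {n d : ℕ} (A1 A2 : Matrix (Fin n) (Fin d) ℝ) (j1 i2 : Fin n)
    (v : Fin d × Fin d → ℝ) :
    linmap A1 A2 j1 i2 v = ∑ q : Fin d × Fin d, (A1 ⊗ₖ A2) (j1, i2) q * v q := by
  simp [linmap]

lemma linmap_single {n d : ℕ} (A1 A2 : Matrix (Fin n) (Fin d) ℝ) (j1 i2 : Fin n)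
    (i : Fin d × Fin d) :
    linmap A1 A2 j1 i2 (Pi.single i 1) = Acol A1 A2 j1 i i2 := by
  rw [linmap_apply]
  rw [Finset.sum_eq_single_of_mem i (Finset.mem_univ i)]
  · simp [Acol]
  · intro q _ hq
    simp [Pi.single_eq_of_ne hq]

lemma hasFDerivAt_uvec {n d : ℕ} (A1 A2 : Matrix (Fin n) (Fin d) ℝ) (j1 i2 : Fin n)
    (x : Fin d × Fin d → ℝ) :
    HasFDerivAt (fun y => uvec A1 A2 j1 y i2)
      (uvec A1 A2 j1 x i2 • linmap A1 A2 j1 i2) x := by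
  have h1 : HasFDerivAt (fun y : Fin d × Fin d → ℝ =>
      ∑ q : Fin d × Fin d, (A1 ⊗ₖ A2) (j1, i2) q * y q) (linmap A1 A2 j1 i2) x := by
    have he : (fun y : Fin d × Fin d → ℝ =>
        ∑ q : Fin d × Fin d, (A1 ⊗ₖ A2) (j1, i2) q * y q) = ⇑(linmap A1 A2 j1 i2) := by
      funext y; rw [linmap_apply]
    rw [he]
    exact (linmap A1 A2 j1 i2).hasFDerivAt
  simpa [uvec] using h1.exp

lemma hasFDerivAt_alpha {n d : ℕ} (A1 A2 : Matrix (Fin n) (Fin d) ℝ) (j1 : Fin n)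
    (x : Fin d × Fin d → ℝ) :
    HasFDerivAt (fun y => alphaval A1 A2 j1 y)
      (∑ i2 : Fin n, uvec A1 A2 j1 x i2 • linmap A1 A2 j1 i2) x := by
  unfold alphaval
  exact HasFDerivAt.fun_sum fun i2 _ => hasFDerivAt_uvec A1 A2 j1 i2 x

lemma alphaval_pos {n d : ℕ} (hn : 0 < n) (A1 A2 : Matrix (Fin n) (Fin d) ℝ)
    (j1 : Fin n) (x : Fin d × Fin d → ℝ) : 0 < alphaval A1 A2 j1 x := by
  have : Nonempty (Fin n) := ⟨⟨0, hn⟩⟩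
  exact Finset.sum_pos (fun i2 _ => Real.exp_pos _) Finset.univ_nonempty

lemma hasFDerivAt_fvec {n d : ℕ} (hn : 0 < n) (A1 A2 : Matrix (Fin n) (Fin d) ℝ)
    (j1 i2 : Fin n) (x : Fin d × Fin d → ℝ) :
    HasFDerivAt (fun y => fvec A1 A2 j1 y i2)
      ((alphaval A1 A2 j1 x)⁻¹ • (uvec A1 A2 j1 x i2 • linmap A1 A2 j1 i2)
        + uvec A1 A2 j1 x i2 •
          (-(alphaval A1 A2 j1 x ^ 2)⁻¹ •
            ∑ k : Fin n, uvec A1 A2 j1 x k • linmap A1 A2 j1 k)) x := by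
  have hα := (alphaval_pos hn A1 A2 j1 x).ne'
  have hinv : HasFDerivAt (fun y => (alphaval A1 A2 j1 y)⁻¹)
      ((-(alphaval A1 A2 j1 x ^ 2)⁻¹) •
        ∑ k : Fin n, uvec A1 A2 j1 x k • linmap A1 A2 j1 k) x :=
    (hasDerivAt_inv hα).comp_hasFDerivAt x (hasFDerivAt_alpha A1 A2 j1 x)
  have := hinv.fun_mul (hasFDerivAt_uvec A1 A2 j1 i2 x)
  simpa [fvec] using this

/-- For fixed `i ∈ [d²]`,
`∂ L_exp(x) / ∂ x_i
  = ∑_{j1=1}^n ( ⟨c(x)_{j1}, f(x)_{j1} ∘ 𝖠_{[j1],i}⟩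
      − ⟨c(x)_{j1}, f(x)_{j1}⟩ · ⟨f(x)_{j1}, 𝖠_{[j1],i}⟩ )`. -/
theorem deriv_Lexp (n d : ℕ) (A1 A2 : Matrix (Fin n) (Fin d) ℝ)
    (b : Fin n × Fin n → ℝ) (i : Fin d × Fin d) (x : Fin d × Fin d → ℝ) :
    fderiv ℝ (fun y : Fin d × Fin d → ℝ => Lexp A1 A2 b y) x (Pi.single i 1)
      = ∑ j1 : Fin n,
          ((∑ i2 : Fin n, cvec A1 A2 b j1 x i2
              * (fvec A1 A2 j1 x i2 * Acol A1 A2 j1 i i2))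
            - (∑ i2 : Fin n, cvec A1 A2 b j1 x i2 * fvec A1 A2 j1 x i2)
              * ∑ i2 : Fin n, fvec A1 A2 j1 x i2 * Acol A1 A2 j1 i i2) := by
  rcases Nat.eq_zero_or_pos n with hn | hn
  · subst hn
    have : (fun y : Fin d × Fin d → ℝ => Lexp A1 A2 b y) = fun _ => (0 : ℝ) := by
      funext y; simp [Lexp]
    rw [this]
    simp
  · -- derivative of each cvec
    set Dc : Fin n → Fin n → (Fin d × Fin d → ℝ) →L[ℝ] ℝ := fun j1 i2 =>
      (alphaval A1 A2 j1 x)⁻¹ • (uvec A1 A2 j1 x i2 • linmap A1 A2 j1 i2)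
        + uvec A1 A2 j1 x i2 •
          (-(alphaval A1 A2 j1 x ^ 2)⁻¹ •
            ∑ k : Fin n, uvec A1 A2 j1 x k • linmap A1 A2 j1 k) with hDc
    have hc : ∀ j1 i2 : Fin n,
        HasFDerivAt (fun y => cvec A1 A2 b j1 y i2) (Dc j1 i2) x := by
      intro j1 i2
      have := (hasFDerivAt_fvec hn A1 A2 j1 i2 x).sub_const (b (j1, i2))
      simpa [cvec] using this
    have hsq : ∀ j1 i2 : Fin n,
        HasFDerivAt (fun y => (cvec A1 A2 b j1 y i2) ^ 2)
          ((2 * cvec A1 A2 b j1 x i2) • Dc j1 i2) x := by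
      intro j1 i2
      have := (hc j1 i2).fun_mul (hc j1 i2)
      have he : (fun y => (cvec A1 A2 b j1 y i2) ^ 2)
          = fun y => cvec A1 A2 b j1 y i2 * cvec A1 A2 b j1 y i2 := by
        funext y; ring
      rw [he]
      rw [two_mul, add_smul]
      exact this
    have hL : HasFDerivAt (fun y : Fin d × Fin d → ℝ => Lexp A1 A2 b y)
        (∑ j1 : Fin n, (0.5 : ℝ) •
          ∑ i2 : Fin n, (2 * cvec A1 A2 b j1 x i2) • Dc j1 i2) x := by
      unfold Lexp
      exact HasFDerivAt.fun_sum fun j1 _ =>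
        (HasFDerivAt.fun_sum fun i2 _ => hsq j1 i2).const_mul (0.5 : ℝ)
    rw [hL.fderiv]
    -- evaluate at Pi.single i 1
    simp only [ContinuousLinearMap.coe_sum', Finset.sum_apply,
      ContinuousLinearMap.coe_smul', Pi.smul_apply, ContinuousLinearMap.add_apply,
      hDc, linmap_single, smul_eq_mul]
    refine Finset.sum_congr rfl fun j1 _ => ?_
    have hα := (alphaval_pos hn A1 A2 j1 x).ne'
    set α := alphaval A1 A2 j1 x with hαdef
    set u : Fin n → ℝ := fun k => uvec A1 A2 j1 x k with hu
    set c : Fin n → ℝ := fun k => cvec A1 A2 b j1 x k with hcv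
    set a : Fin n → ℝ := fun k => Acol A1 A2 j1 i k with ha
    have hfv : ∀ k, fvec A1 A2 j1 x k = α⁻¹ * u k := fun k => rfl
    set S : ℝ := ∑ m : Fin n, u m * a m with hSdef
    calc (0.5 : ℝ) * ∑ i2 : Fin n, (2 * c i2) *
            (α⁻¹ * (u i2 * a i2) + u i2 * (-(α ^ 2)⁻¹ * S))
        = ∑ i2 : Fin n, (c i2 * (α⁻¹ * u i2 * a i2)
            - c i2 * (α⁻¹ * u i2) * (α⁻¹ * S)) := by
          rw [Finset.mul_sum]
          refine Finset.sum_congr rfl fun i2 _ => ?_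
          field_simp
          ring
      _ = (∑ i2 : Fin n, c i2 * (fvec A1 A2 j1 x i2 * a i2))
            - (∑ i2 : Fin n, c i2 * fvec A1 A2 j1 x i2)
              * ∑ i2 : Fin n, fvec A1 A2 j1 x i2 * a i2 := by
          have hT : (∑ i2 : Fin n, fvec A1 A2 j1 x i2 * a i2) = α⁻¹ * S := by
            rw [hSdef, Finset.mul_sum]
            exact Finset.sum_congr rfl fun i2 _ => by rw [hfv]; ring
          have h1 : (∑ i2 : Fin n, c i2 * (α⁻¹ * u i2 * a i2))
              = ∑ i2 : Fin n, c i2 * (fvec A1 A2 j1 x i2 * a i2) :=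
            Finset.sum_congr rfl fun i2 _ => by rw [hfv]
          have h2 : (∑ i2 : Fin n, c i2 * (α⁻¹ * u i2) * (α⁻¹ * S))
              = (∑ i2 : Fin n, c i2 * fvec A1 A2 j1 x i2)
                * ∑ i2 : Fin n, fvec A1 A2 j1 x i2 * a i2 := by
            rw [hT, Finset.sum_mul]
            exact Finset.sum_congr rfl fun i2 _ => by rw [hfv i2]
          rw [Finset.sum_sub_distrib, h1, h2]
end
end

section
/- Let f : ℝ^d → ℝ be differentiable, μ-strongly convex and L-smooth with global minimizer x* ∈ ℝ^d, and let 0 < η ≤ 1/(4L). Then for every u ∈ ℝ^d, ‖u − η∇f(u) − x*‖₂² ≤ (1 − μη)‖u − x*‖₂² − η·(f(u) − f(x*)). -/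
open scoped RealInnerProductSpace

private 
lemma descent (d : ℕ) (L : ℝ) (f : EuclideanSpace ℝ (Fin d) → ℝ)
    (hdiff : Differentiable ℝ f)
    (hsmooth : ∀ x y : EuclideanSpace ℝ (Fin d),
      ‖gradient f x - gradient f y‖ ≤ L * ‖x - y‖)
    (x y : EuclideanSpace ℝ (Fin d)) :
    f y ≤ f x + ⟪gradient f x, y - x⟫ + L * ‖y - x‖ ^ 2 := by
  set v := y - x with hv
  have hderiv : ∀ t : ℝ, HasDerivAt (fun s : ℝ => f (x + s • v))
      ⟪gradient f (x + t • v), v⟫ t := by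
    intro t
    have hc : HasDerivAt (fun s : ℝ => x + s • v) v t := by
      simpa using ((hasDerivAt_id t).smul_const v).const_add x
    have hf : HasFDerivAt f ((InnerProductSpace.toDual ℝ _) (gradient f (x + t • v)))
        (x + t • v) := hasGradientAt_iff_hasFDerivAt.mp (hdiff _).hasGradientAt
    have h2 : HasDerivAt (fun s : ℝ => f (x + s • v))
        ((InnerProductSpace.toDual ℝ _) (gradient f (x + t • v)) v) t := hf.comp_hasDerivAt t hc
    simpa using h2
  obtain ⟨c, hc, hceq⟩ := exists_hasDerivAt_eq_slope (fun s : ℝ => f (x + s • v))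
    (fun t => ⟪gradient f (x + t • v), v⟫) (by norm_num : (0:ℝ) < 1)
    (fun t _ => (hderiv t).continuousAt.continuousWithinAt)
    (fun t _ => hderiv t)
  have h01 : f y - f x = ⟪gradient f (x + c • v), v⟫ := by
    have e1 : x + (1:ℝ) • v = y := by rw [one_smul, hv]; abel
    have e0 : x + (0:ℝ) • v = x := by simp
    rw [hceq, e1, e0]; ring
  have hsplit : ⟪gradient f (x + c • v), v⟫
      = ⟪gradient f x, v⟫ + ⟪gradient f (x + c • v) - gradient f x, v⟫ := by
    rw [inner_sub_left]; ring
  have hbound : ⟪gradient f (x + c • v) - gradient f x, v⟫ ≤ L * ‖v‖ ^ 2 := by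
    calc ⟪gradient f (x + c • v) - gradient f x, v⟫
        ≤ ‖gradient f (x + c • v) - gradient f x‖ * ‖v‖ := real_inner_le_norm _ _
      _ ≤ (L * ‖x + c • v - x‖) * ‖v‖ :=
          mul_le_mul_of_nonneg_right (hsmooth _ _) (norm_nonneg v)
      _ ≤ L * ‖v‖ ^ 2 := by
          have : ‖x + c • v - x‖ = c * ‖v‖ := by
            simp [norm_smul, abs_of_pos hc.1]
          rw [this]
          have hLv : 0 ≤ L * ‖v‖ := by
            have := hsmooth (x + v) x
            simp at this
            nlinarith [norm_nonneg (gradient f (x+v) - gradient f x), norm_nonneg v,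
              hc.1.le, hc.2.le]
          nlinarith [norm_nonneg v, hc.1.le, hc.2.le, mul_nonneg hLv (norm_nonneg v)]
  linarith [h01, hsplit, hbound]

/-- If `f : ℝ^d → ℝ` is differentiable, `μ`-strongly convex (`μ ≥ 0`)
and `L`-smooth with global minimizer `x*`, and `0 < η ≤ 1/(4L)`, then for every `u`,
`‖u − η∇f(u) − x*‖² ≤ (1 − μη)‖u − x*‖² − η (f(u) − f(x*))`. -/
theorem gradient_step_contraction (d : ℕ) (L μ η : ℝ) (hμ : 0 ≤ μ)
    (hη : 0 < η) (hηL : η ≤ 1 / (4 * L))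
    (f : EuclideanSpace ℝ (Fin d) → ℝ)
    (hdiff : Differentiable ℝ f)
    (hsmooth : ∀ x y : EuclideanSpace ℝ (Fin d),
      ‖gradient f x - gradient f y‖ ≤ L * ‖x - y‖)
    (hconv : ∀ x y : EuclideanSpace ℝ (Fin d),
      f x + ⟪gradient f x, y - x⟫ + μ / 2 * ‖y - x‖ ^ 2 ≤ f y)
    (xstar : EuclideanSpace ℝ (Fin d))
    (hmin : ∀ y, f xstar ≤ f y)
    (u : EuclideanSpace ℝ (Fin d)) :
    ‖u - η • gradient f u - xstar‖ ^ 2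
      ≤ (1 - μ * η) * ‖u - xstar‖ ^ 2 - η * (f u - f xstar) := by
  have hL : 0 < L := by
    by_contra h
    push_neg at h
    have h4 : 4 * L ≤ 0 := by linarith
    have : 1 / (4 * L) ≤ 0 := div_nonpos_of_nonneg_of_nonpos (by norm_num) h4
    linarith
  set g := gradient f u with hg
  -- f u - f xstar ≥ ‖g‖²/(4L) via descent with step 1/(2L)
  have hdes := descent d L f hdiff hsmooth u (u - (1 / (2 * L)) • g)
  have hkey : (1 / (4 * L)) * ‖g‖ ^ 2 ≤ f u - f xstar := by
    have hsub : u - (1 / (2 * L)) • g - u = -((1 / (2 * L)) • g) := by abel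
    have hinner : ⟪g, u - (1 / (2 * L)) • g - u⟫ = -(1 / (2 * L)) * ‖g‖ ^ 2 := by
      rw [hsub, inner_neg_right, real_inner_smul_right, real_inner_self_eq_norm_sq]
      ring
    have hnorm : ‖u - (1 / (2 * L)) • g - u‖ ^ 2 = (1 / (2 * L)) ^ 2 * ‖g‖ ^ 2 := by
      rw [hsub, norm_neg, norm_smul]
      rw [Real.norm_eq_abs, abs_of_pos (by positivity : (0:ℝ) < 1 / (2 * L))]
      ring
    have hmin' := hmin (u - (1 / (2 * L)) • g)
    rw [hinner, hnorm] at hdes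
    have hL2 : L * ((1 / (2 * L)) ^ 2 * ‖g‖ ^ 2) = (1 / (4 * L)) * ‖g‖ ^ 2 := by
      field_simp; ring
    rw [hL2] at hdes
    have : 1 / (2 * L) - 1 / (4 * L) = 1 / (4 * L) := by field_simp; ring
    nlinarith [hdes, hmin']
  -- strong convexity at (u, xstar)
  have hsc := hconv u xstar
  have hinner2 : ⟪g, xstar - u⟫ = -⟪g, u - xstar⟫ := by
    rw [← inner_neg_right]; congr 1; abel
  have hnorm2 : ‖xstar - u‖ = ‖u - xstar‖ := norm_sub_rev _ _
  rw [hinner2, hnorm2] at hsc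
  -- expand LHS
  have hexp : ‖u - η • g - xstar‖ ^ 2
      = ‖u - xstar‖ ^ 2 - 2 * η * ⟪g, u - xstar⟫ + η ^ 2 * ‖g‖ ^ 2 := by
    have : u - η • g - xstar = (u - xstar) - η • g := by abel
    rw [this, norm_sub_sq_real, real_inner_smul_right, norm_smul, Real.norm_eq_abs,
      abs_of_pos hη, real_inner_comm]
    ring
  rw [hexp]
  have hgsq : η ^ 2 * ‖g‖ ^ 2 ≤ η * (f u - f xstar) := by
    have h1 : η * (η * ‖g‖ ^ 2) ≤ η * ((1 / (4 * L)) * ‖g‖ ^ 2) := by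
      apply mul_le_mul_of_nonneg_left _ hη.le
      exact mul_le_mul_of_nonneg_right hηL (by positivity)
    have h2 : η * ((1 / (4 * L)) * ‖g‖ ^ 2) ≤ η * (f u - f xstar) :=
      mul_le_mul_of_nonneg_left hkey hη.le
    nlinarith [h1, h2]
  nlinarith [hsc, hgsq, mul_le_mul_of_nonneg_left hsc hη.le]
end

section
/- Let R be a random b×d real matrix whose entries are independent Gaussian random variables with mean 0 and variance 1/b. Then for every fixed g ∈ ℝ^d, E[‖RᵀR g‖₂²] ≤ (1 + 3d/b)·‖g‖₂². -/
open Matrix MeasureTheory ProbabilityTheory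
open scoped NNReal ENNReal

section SketchAux
open Real Filter Asymptotics


lemma integrable_pow_mul_exp_neg_mul_sq {c : ℝ} (hc : 0 < c) (k : ℕ) :
    Integrable (fun x : ℝ => x ^ k * Real.exp (-c * x ^ 2)) := by
  have h := integrable_rpow_mul_exp_neg_mul_sq hc (s := (k : ℝ))
    (by exact_mod_cast neg_one_lt_zero.trans_le (Nat.cast_nonneg k))
  simpa [Real.rpow_natCast] using h

lemma tendsto_pow_mul_exp_neg_mul_sq_atTop {c : ℝ} (hc : 0 < c) (k : ℕ) :
    Tendsto (fun x : ℝ => x ^ k * Real.exp (-c * x ^ 2)) atTop (nhds 0) := by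
  have h := rpow_mul_exp_neg_mul_sq_isLittleO_exp_neg hc (s := (k : ℝ))
  have h2 : (fun x : ℝ => x ^ k * Real.exp (-c * x ^ 2)) =o[atTop]
      fun x => Real.exp (-(2⁻¹ * x)) := by
    simpa [Real.rpow_natCast] using h
  refine h2.trans_tendsto ?_
  have : Tendsto (fun x : ℝ => -(2⁻¹ * x)) atTop atBot := by
    apply Filter.tendsto_neg_atBot_iff.mpr
    exact Tendsto.const_mul_atTop (by norm_num) tendsto_id
  exact Real.tendsto_exp_atBot.comp this

lemma tendsto_pow_mul_exp_neg_mul_sq_atBot {c : ℝ} (hc : 0 < c) (k : ℕ) :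
    Tendsto (fun x : ℝ => x ^ k * Real.exp (-c * x ^ 2)) atBot (nhds 0) := by
  have h := ((tendsto_pow_mul_exp_neg_mul_sq_atTop hc k).const_mul ((-1 : ℝ) ^ k)).comp
    tendsto_neg_atBot_atTop
  simp only [Function.comp_def, mul_zero] at h
  convert h using 2 with x
  rw [neg_pow]
  ring_nf
  rw [mul_comm k 2, pow_mul]
  norm_num

lemma gauss_rec {c : ℝ} (hc : 0 < c) (k : ℕ) :
    (2 * c) * ∫ x : ℝ, x ^ (k + 2) * Real.exp (-c * x ^ 2)
      = (k + 1 : ℝ) * ∫ x : ℝ, x ^ k * Real.exp (-c * x ^ 2) := by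
  set F : ℝ → ℝ := fun x => x ^ (k + 1) * Real.exp (-c * x ^ 2) with hF
  set f' : ℝ → ℝ := fun x =>
    (k + 1 : ℝ) * (x ^ k * Real.exp (-c * x ^ 2)) - 2 * c * (x ^ (k + 2) * Real.exp (-c * x ^ 2))
    with hf'
  have hderiv : ∀ x : ℝ, HasDerivAt F (f' x) x := by
    intro x
    have h1 : HasDerivAt (fun x : ℝ => x ^ (k + 1)) ((k + 1 : ℝ) * x ^ k) x := by
      simpa using hasDerivAt_pow (k + 1) x
    have h2 : HasDerivAt (fun x : ℝ => Real.exp (-c * x ^ 2))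
        (Real.exp (-c * x ^ 2) * (-c * (2 * x))) x := by
      have h3 : HasDerivAt (fun x : ℝ => -c * x ^ 2) (-c * (2 * x)) x := by
        simpa using (hasDerivAt_pow 2 x).const_mul (-c)
      exact h3.exp
    have := h1.fun_mul h2
    refine this.congr_deriv ?_
    simp only [f']
    ring
  have hint : Integrable f' :=
    (((integrable_pow_mul_exp_neg_mul_sq hc k).const_mul _)).sub
      (((integrable_pow_mul_exp_neg_mul_sq hc (k + 2)).const_mul _))
  have htop : Tendsto F atTop (nhds 0) := tendsto_pow_mul_exp_neg_mul_sq_atTop hc (k + 1)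
  have hbot : Tendsto F atBot (nhds 0) := tendsto_pow_mul_exp_neg_mul_sq_atBot hc (k + 1)
  have h0 : ∫ x : ℝ, f' x = 0 - 0 :=
    MeasureTheory.integral_of_hasDerivAt_of_tendsto hderiv hint hbot htop
  rw [hf'] at h0
  rw [integral_sub ((integrable_pow_mul_exp_neg_mul_sq hc k).const_mul _)
    ((integrable_pow_mul_exp_neg_mul_sq hc (k + 2)).const_mul _),
    integral_const_mul, integral_const_mul] at h0
  linarith [h0]

lemma gauss_odd_one {c : ℝ} (hc : 0 < c) :
    ∫ x : ℝ, x ^ 1 * Real.exp (-c * x ^ 2) = 0 := by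
  set F : ℝ → ℝ := fun x => Real.exp (-c * x ^ 2)
  have hderiv : ∀ x : ℝ, HasDerivAt F (-(2 * c) * (x ^ 1 * Real.exp (-c * x ^ 2))) x := by
    intro x
    have h3 : HasDerivAt (fun x : ℝ => -c * x ^ 2) (-c * (2 * x)) x := by
      simpa using (hasDerivAt_pow 2 x).const_mul (-c)
    refine h3.exp.congr_deriv ?_
    ring
  have hint : Integrable fun x : ℝ => -(2 * c) * (x ^ 1 * Real.exp (-c * x ^ 2)) :=
    (integrable_pow_mul_exp_neg_mul_sq hc 1).const_mul _
  have htop : Tendsto F atTop (nhds 0) := by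
    have h := tendsto_pow_mul_exp_neg_mul_sq_atTop hc 0
    simp only [pow_zero, one_mul] at h; exact h
  have hbot : Tendsto F atBot (nhds 0) := by
    have h := tendsto_pow_mul_exp_neg_mul_sq_atBot hc 0
    simp only [pow_zero, one_mul] at h; exact h
  have h0 := MeasureTheory.integral_of_hasDerivAt_of_tendsto hderiv hint hbot htop
  rw [integral_const_mul] at h0
  have hne : -(2 * c) ≠ 0 := neg_ne_zero.mpr (by positivity)
  rw [sub_zero] at h0
  rcases mul_eq_zero.mp h0 with h | h
  · exact absurd h (by positivity)
  · simpa [neg_mul, mul_comm] using h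

open ProbabilityTheory

open scoped NNReal ENNReal

section GaussianMoments

variable {v : ℝ≥0}

lemma integral_gaussianReal_eq (hv : v ≠ 0) (φ : ℝ → ℝ) :
    ∫ x, φ x ∂(gaussianReal 0 v) = ∫ x, gaussianPDFReal 0 v x * φ x := by
  rw [gaussianReal_of_var_ne_zero 0 hv]
  have hmeas : Measurable fun x => Real.toNNReal (gaussianPDFReal 0 v x) :=
    (measurable_gaussianPDFReal 0 v).real_toNNReal
  have hd : (volume.withDensity (gaussianPDF 0 v))
      = volume.withDensity (fun x => ((Real.toNNReal (gaussianPDFReal 0 v x) : ℝ≥0) : ℝ≥0∞)) := by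
    simp only [gaussianPDF_def, ENNReal.ofReal]
  rw [hd, integral_withDensity_eq_integral_smul hmeas]
  refine integral_congr_ae (Filter.Eventually.of_forall fun x => ?_)
  simp only [NNReal.smul_def, Real.coe_toNNReal _ (gaussianPDFReal_nonneg 0 v x), smul_eq_mul]

lemma integrable_gaussianReal_iff (hv : v ≠ 0) (φ : ℝ → ℝ) :
    Integrable φ (gaussianReal 0 v) ↔
      Integrable (fun x => gaussianPDFReal 0 v x * φ x) volume := by
  rw [gaussianReal_of_var_ne_zero 0 hv]
  have hmeas : Measurable fun x => Real.toNNReal (gaussianPDFReal 0 v x) :=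
    (measurable_gaussianPDFReal 0 v).real_toNNReal
  have hd : (volume.withDensity (gaussianPDF 0 v))
      = volume.withDensity (fun x => ((Real.toNNReal (gaussianPDFReal 0 v x) : ℝ≥0) : ℝ≥0∞)) := by
    simp only [gaussianPDF_def, ENNReal.ofReal]
  rw [hd, integrable_withDensity_iff_integrable_smul hmeas]
  constructor <;> intro h <;> [skip; skip] <;>
  · refine h.congr (Filter.Eventually.of_forall fun x => ?_)
    simp only [NNReal.smul_def, Real.coe_toNNReal _ (gaussianPDFReal_nonneg 0 v x), smul_eq_mul]

lemma gaussianPDFReal_zero_eq (v : ℝ≥0) (x : ℝ) :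
    gaussianPDFReal 0 v x
      = (Real.sqrt (2 * π * v))⁻¹ * Real.exp (-(2 * (v : ℝ))⁻¹ * x ^ 2) := by
  have hdef : gaussianPDFReal 0 v x
      = (Real.sqrt (2 * π * v))⁻¹ * Real.exp (-(x - 0) ^ 2 / (2 * (v : ℝ))) := by
    rw [gaussianPDFReal_def]
  rw [hdef]
  have harg : -(x - 0) ^ 2 / (2 * (v : ℝ)) = -(2 * (v : ℝ))⁻¹ * x ^ 2 := by
    rw [sub_zero]
    by_cases h : (v : ℝ) = 0
    · simp [h]
    · field_simp
  rw [harg]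

lemma integral_pow_gaussianReal (hv : v ≠ 0) (n : ℕ) :
    ∫ x, x ^ n ∂(gaussianReal 0 v)
      = (Real.sqrt (2 * π * v))⁻¹ * ∫ x : ℝ, x ^ n * Real.exp (-(2 * (v : ℝ))⁻¹ * x ^ 2) := by
  rw [integral_gaussianReal_eq hv]
  rw [← integral_const_mul]
  congr 1
  ext x
  rw [gaussianPDFReal_zero_eq]
  ring

lemma integrable_pow_gaussianReal (hv : v ≠ 0) (n : ℕ) :
    Integrable (fun x => x ^ n) (gaussianReal 0 v) := by
  rw [integrable_gaussianReal_iff hv]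
  have hc : (0 : ℝ) < (2 * (v : ℝ))⁻¹ := by
    have : (0 : ℝ) < (v : ℝ) := lt_of_le_of_ne (v.coe_nonneg) (by exact_mod_cast hv.symm)
    positivity
  have := (integrable_pow_mul_exp_neg_mul_sq hc n).const_mul (Real.sqrt (2 * π * v))⁻¹
  refine this.congr (Filter.Eventually.of_forall fun x => ?_)
  simp only [gaussianPDFReal_zero_eq]
  ring

lemma sqrt_two_pi_v_mul (hv : v ≠ 0) :
    (Real.sqrt (2 * π * v))⁻¹ * Real.sqrt (π / (2 * (v : ℝ))⁻¹) = 1 := by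
  have hvpos : (0 : ℝ) < (v : ℝ) := lt_of_le_of_ne (v.coe_nonneg) (by exact_mod_cast hv.symm)
  have h1 : π / (2 * (v : ℝ))⁻¹ = 2 * π * v := by
    field_simp
  rw [h1]
  rw [inv_mul_cancel₀]
  positivity

lemma integral_pow_one_gaussianReal (hv : v ≠ 0) :
    ∫ x, x ^ 1 ∂(gaussianReal 0 v) = 0 := by
  have hvpos : (0 : ℝ) < (v : ℝ) := lt_of_le_of_ne (v.coe_nonneg) (by exact_mod_cast hv.symm)
  have hc : (0 : ℝ) < (2 * (v : ℝ))⁻¹ := by positivity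
  rw [integral_pow_gaussianReal hv, gauss_odd_one hc, mul_zero]

lemma integral_pow_two_gaussianReal (hv : v ≠ 0) :
    ∫ x, x ^ 2 ∂(gaussianReal 0 v) = v := by
  have hvpos : (0 : ℝ) < (v : ℝ) := lt_of_le_of_ne (v.coe_nonneg) (by exact_mod_cast hv.symm)
  set c : ℝ := (2 * (v : ℝ))⁻¹ with hcdef
  have hc : (0 : ℝ) < c := by positivity
  have hrec := gauss_rec hc 0
  simp only [pow_zero, one_mul, Nat.cast_zero, zero_add] at hrec
  rw [integral_gaussian] at hrec
  rw [integral_pow_gaussianReal hv]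
  have h2c : (2 * c) ≠ 0 := by positivity
  have : ∫ x : ℝ, x ^ 2 * Real.exp (-c * x ^ 2) = Real.sqrt (π / c) / (2 * c) := by
    field_simp at hrec ⊢
    linarith [hrec]
  rw [this]
  have h3 : (Real.sqrt (2 * π * v))⁻¹ * (Real.sqrt (π / c) / (2 * c))
      = ((Real.sqrt (2 * π * v))⁻¹ * Real.sqrt (π / c)) * (2 * c)⁻¹ := by ring
  rw [h3, sqrt_two_pi_v_mul hv, one_mul, hcdef, mul_inv, inv_inv]
  ring

lemma integral_pow_three_gaussianReal (hv : v ≠ 0) :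
    ∫ x, x ^ 3 ∂(gaussianReal 0 v) = 0 := by
  have hvpos : (0 : ℝ) < (v : ℝ) := lt_of_le_of_ne (v.coe_nonneg) (by exact_mod_cast hv.symm)
  have hc : (0 : ℝ) < (2 * (v : ℝ))⁻¹ := by positivity
  set c : ℝ := (2 * (v : ℝ))⁻¹ with hcdef
  have hrec := gauss_rec hc 1
  rw [gauss_odd_one hc, mul_zero, show (1 + 2 : ℕ) = 3 from rfl] at hrec
  rw [integral_pow_gaussianReal hv, ← hcdef]
  rcases mul_eq_zero.mp hrec with h | h
  · exact absurd h (by positivity)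
  · rw [h, mul_zero]

lemma integral_pow_four_gaussianReal (hv : v ≠ 0) :
    ∫ x, x ^ 4 ∂(gaussianReal 0 v) = 3 * (v : ℝ) ^ 2 := by
  have hvpos : (0 : ℝ) < (v : ℝ) := lt_of_le_of_ne (v.coe_nonneg) (by exact_mod_cast hv.symm)
  have hc : (0 : ℝ) < (2 * (v : ℝ))⁻¹ := by positivity
  set c : ℝ := (2 * (v : ℝ))⁻¹ with hcdef
  have hI2 : (Real.sqrt (2 * π * v))⁻¹ * ∫ x : ℝ, x ^ 2 * Real.exp (-c * x ^ 2) = (v : ℝ) := by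
    rw [hcdef]
    exact (integral_pow_gaussianReal hv 2).symm.trans (integral_pow_two_gaussianReal hv)
  have hrec := gauss_rec hc 2
  rw [show (2 + 2 : ℕ) = 4 from rfl, show ((2 : ℕ) : ℝ) + 1 = 3 by norm_num] at hrec
  rw [integral_pow_gaussianReal hv, ← hcdef]
  have h2c : (2 * c) ≠ 0 := by positivity
  have hI4 : ∫ x : ℝ, x ^ 4 * Real.exp (-c * x ^ 2)
      = 3 * (∫ x : ℝ, x ^ 2 * Real.exp (-c * x ^ 2)) / (2 * c) := by
    rw [eq_div_iff h2c]
    linarith [hrec]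
  rw [hI4]
  have hcv : (2 * c)⁻¹ = (v : ℝ) := by
    rw [hcdef, mul_inv, inv_inv]
    field_simp
  calc (Real.sqrt (2 * π * ↑v))⁻¹ * (3 * (∫ x : ℝ, x ^ 2 * Real.exp (-c * x ^ 2)) / (2 * c))
      = 3 * ((Real.sqrt (2 * π * ↑v))⁻¹ * ∫ x : ℝ, x ^ 2 * Real.exp (-c * x ^ 2)) * (2 * c)⁻¹ := by
        ring
    _ = 3 * (v : ℝ) ^ 2 := by rw [hI2, hcv]; ring

end GaussianMoments

section Transfer

open ProbabilityTheory

variable {Ω : Type*} [MeasureSpace Ω] [IsProbabilityMeasure (ℙ : Measure Ω)]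
variable {X : Ω → ℝ} {v : ℝ≥0}

lemma integrable_pow_of_map (hX : Measurable X) (hv : v ≠ 0)
    (hmap : Measure.map X ℙ = gaussianReal 0 v) (n : ℕ) :
    Integrable (fun ω => X ω ^ n) ℙ := by
  have h := integrable_pow_gaussianReal (v := v) hv n
  rw [← hmap] at h
  exact (integrable_map_measure (measurable_id.pow_const n).aestronglyMeasurable hX.aemeasurable).mp h

lemma integral_pow_of_map (hX : Measurable X) (hv : v ≠ 0)
    (hmap : Measure.map X ℙ = gaussianReal 0 v) (n : ℕ) :
    ∫ ω, X ω ^ n ∂ℙ = ∫ x, x ^ n ∂(gaussianReal 0 v) := by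
  rw [← hmap, integral_map hX.aemeasurable]
  exact (measurable_id.pow_const n).aestronglyMeasurable

end Transfer

section Key

open ProbabilityTheory

variable {b d : ℕ} {Ω : Type*} [MeasureSpace Ω] [IsProbabilityMeasure (ℙ : Measure Ω)]
variable {X : Fin b × Fin d → Ω → ℝ} {σ2 : ℝ}

lemma pair_int (hXm : ∀ p, Measurable (X p))
    (hindep : iIndepFun X ℙ)
    (hInt : ∀ p n, Integrable (fun ω => X p ω ^ n) ℙ)
    (i : Fin b) (j k : Fin d) :
    Integrable (fun ω => X (i, j) ω * X (i, k) ω) ℙ := by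
  by_cases h : j = k
  · subst h
    exact (hInt (i, j) 2).congr (Filter.Eventually.of_forall fun ω => sq (X (i, j) ω))
  · have hind : IndepFun (X (i, j)) (X (i, k)) ℙ :=
      hindep.indepFun (by simp [Prod.ext_iff, h])
    have := hind.integrable_mul (by simpa using hInt (i, j) 1) (by simpa using hInt (i, k) 1)
    exact this.congr (Filter.Eventually.of_forall fun ω => rfl)

lemma pair_eval (hXm : ∀ p, Measurable (X p))
    (hindep : iIndepFun X ℙ)
    (hM1 : ∀ p, ∫ ω, X p ω ∂ℙ = 0)
    (hM2 : ∀ p, ∫ ω, X p ω ^ 2 ∂ℙ = σ2)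
    (i : Fin b) (j k : Fin d) :
    ∫ ω, X (i, j) ω * X (i, k) ω ∂ℙ = if j = k then σ2 else 0 := by
  by_cases h : j = k
  · subst h
    rw [if_pos rfl, ← hM2 (i, j)]
    exact integral_congr_ae (Filter.Eventually.of_forall fun ω => (sq (X (i, j) ω)).symm)
  · rw [if_neg h]
    have hind : IndepFun (X (i, j)) (X (i, k)) ℙ :=
      hindep.indepFun (by simp [Prod.ext_iff, h])
    rw [hind.integral_fun_mul_eq_mul_integral (hXm _).aestronglyMeasurable (hXm _).aestronglyMeasurable,
      hM1 (i, j), zero_mul]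

lemma key_lemma (hXm : ∀ p, Measurable (X p))
    (hindep : iIndepFun X ℙ)
    (hInt : ∀ p n, Integrable (fun ω => X p ω ^ n) ℙ)
    (hM1 : ∀ p, ∫ ω, X p ω ∂ℙ = 0)
    (hM2 : ∀ p, ∫ ω, X p ω ^ 2 ∂ℙ = σ2)
    (hM3 : ∀ p, ∫ ω, X p ω ^ 3 ∂ℙ = 0)
    (hM4 : ∀ p, ∫ ω, X p ω ^ 4 ∂ℙ = 3 * σ2 ^ 2)
    (i i' : Fin b) (j k k' : Fin d) :
    Integrable (fun ω => (X (i, j) ω * X (i, k) ω) * (X (i', j) ω * X (i', k') ω)) ℙ ∧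
    ∫ ω, (X (i, j) ω * X (i, k) ω) * (X (i', j) ω * X (i', k') ω) ∂ℙ
      = if i = i' then (if k = k' then (if k = j then 3 * σ2 ^ 2 else σ2 ^ 2) else 0)
        else (if k = j then σ2 else 0) * (if k' = j then σ2 else 0) := by
  by_cases hii : i = i'
  · subst hii
    rw [if_pos rfl]
    by_cases hkk : k = k'
    · subst hkk
      rw [if_pos rfl]
      by_cases hkj : k = j
      · subst hkj
        rw [if_pos rfl]
        have hfe : ∀ ω, (X (i, k) ω * X (i, k) ω) * (X (i, k) ω * X (i, k) ω)
            = X (i, k) ω ^ 4 := fun ω => by ring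
        constructor
        · exact (hInt (i, k) 4).congr (Filter.Eventually.of_forall fun ω => (hfe ω).symm)
        · rw [integral_congr_ae (Filter.Eventually.of_forall hfe)]
          exact hM4 (i, k)
      · rw [if_neg hkj]
        have hne : ((i, j) : Fin b × Fin d) ≠ (i, k) := by simp [Prod.ext_iff, Ne.symm hkj]
        have hind : IndepFun (fun ω => X (i, j) ω ^ 2) (fun ω => X (i, k) ω ^ 2) ℙ :=
          (hindep.indepFun hne).comp (measurable_id.pow_const 2) (measurable_id.pow_const 2)
        have hfe : ∀ ω, (X (i, j) ω * X (i, k) ω) * (X (i, j) ω * X (i, k) ω)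
            = X (i, j) ω ^ 2 * X (i, k) ω ^ 2 := fun ω => by ring
        constructor
        · exact (hind.integrable_mul (hInt (i, j) 2) (hInt (i, k) 2)).congr
            (Filter.Eventually.of_forall fun ω => (hfe ω).symm)
        · rw [integral_congr_ae (Filter.Eventually.of_forall hfe),
            hind.integral_fun_mul_eq_mul_integral ((hXm _).pow_const 2).aestronglyMeasurable
              ((hXm _).pow_const 2).aestronglyMeasurable, hM2, hM2]
          ring
    · rw [if_neg hkk]
      by_cases hkj : k = j
      · subst hkj
        -- integrand = X (i,k) ^ 3 * X (i,k')
        have hk'j : k' ≠ k := fun h => hkk h.symm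
        have hne : ((i, k) : Fin b × Fin d) ≠ (i, k') := by simp [Prod.ext_iff, hkk]
        have hind : IndepFun (fun ω => X (i, k) ω ^ 3) (X (i, k')) ℙ :=
          (hindep.indepFun hne).comp (measurable_id.pow_const 3) measurable_id
        have hfe : ∀ ω, (X (i, k) ω * X (i, k) ω) * (X (i, k) ω * X (i, k') ω)
            = X (i, k) ω ^ 3 * X (i, k') ω := fun ω => by ring
        constructor
        · exact (hind.integrable_mul (hInt (i, k) 3) (by simpa using hInt (i, k') 1)).congr
            (Filter.Eventually.of_forall fun ω => (hfe ω).symm)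
        · rw [integral_congr_ae (Filter.Eventually.of_forall hfe),
            hind.integral_fun_mul_eq_mul_integral ((hXm _).pow_const 3).aestronglyMeasurable
              (hXm _).aestronglyMeasurable, hM3, zero_mul]
      · by_cases hk'j : k' = j
        · subst hk'j
          -- integrand = X (i,k') ^ 3 * X (i,k)
          have hne : ((i, k') : Fin b × Fin d) ≠ (i, k) := by
            simp [Prod.ext_iff, Ne.symm hkk]
          have hind : IndepFun (fun ω => X (i, k') ω ^ 3) (X (i, k)) ℙ :=
            (hindep.indepFun hne).comp (measurable_id.pow_const 3) measurable_id
          have hfe : ∀ ω, (X (i, k') ω * X (i, k) ω) * (X (i, k') ω * X (i, k') ω)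
              = X (i, k') ω ^ 3 * X (i, k) ω := fun ω => by ring
          constructor
          · exact (hind.integrable_mul (hInt (i, k') 3) (by simpa using hInt (i, k) 1)).congr
              (Filter.Eventually.of_forall fun ω => (hfe ω).symm)
          · rw [integral_congr_ae (Filter.Eventually.of_forall hfe),
              hind.integral_fun_mul_eq_mul_integral ((hXm _).pow_const 3).aestronglyMeasurable
                (hXm _).aestronglyMeasurable, hM3, zero_mul]
        · -- j, k, k' pairwise distinct; integrand = (X(i,j)^2 * X(i,k)) * X(i,k')
          have hne1 : ((i, j) : Fin b × Fin d) ≠ (i, k) := by simp [Prod.ext_iff, Ne.symm hkj]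
          have hind1 : IndepFun (fun ω => X (i, j) ω ^ 2) (X (i, k)) ℙ :=
            (hindep.indepFun hne1).comp (measurable_id.pow_const 2) measurable_id
          have hf1int : Integrable (fun ω => X (i, j) ω ^ 2 * X (i, k) ω) ℙ := by
            have := hind1.integrable_mul (hInt (i, j) 2) (by simpa using hInt (i, k) 1)
            exact this.congr (Filter.Eventually.of_forall fun ω => rfl)
          have hind2 : IndepFun (fun ω => X (i, j) ω ^ 2 * X (i, k) ω) (X (i, k')) ℙ := by
            have h := hindep.indepFun_prodMk hXm (i, j) (i, k) (i, k')
              (by simp [Prod.ext_iff, Ne.symm hk'j]) (by simp [Prod.ext_iff, hkk])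
            exact h.comp (by fun_prop : Measurable fun q : ℝ × ℝ => q.1 ^ 2 * q.2)
              measurable_id
          have hfe : ∀ ω, (X (i, j) ω * X (i, k) ω) * (X (i, j) ω * X (i, k') ω)
              = (X (i, j) ω ^ 2 * X (i, k) ω) * X (i, k') ω := fun ω => by ring
          constructor
          · exact (hind2.integrable_mul hf1int (by simpa using hInt (i, k') 1)).congr
              (Filter.Eventually.of_forall fun ω => (hfe ω).symm)
          · rw [integral_congr_ae (Filter.Eventually.of_forall hfe),
              hind2.integral_fun_mul_eq_mul_integral (((hXm _).pow_const 2).mul (hXm _)).aestronglyMeasurable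
                (hXm _).aestronglyMeasurable, hM1, mul_zero]
  · rw [if_neg hii]
    have hind4 : IndepFun (fun ω => (X (i, j) ω, X (i, k) ω))
        (fun ω => (X (i', j) ω, X (i', k') ω)) ℙ :=
      hindep.indepFun_prodMk_prodMk hXm (i, j) (i, k) (i', j) (i', k')
        (by simp [Prod.ext_iff, hii]) (by simp [Prod.ext_iff, hii])
        (by simp [Prod.ext_iff, hii]) (by simp [Prod.ext_iff, hii])
    have hind : IndepFun (fun ω => X (i, j) ω * X (i, k) ω)
        (fun ω => X (i', j) ω * X (i', k') ω) ℙ :=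
      hind4.comp (measurable_fst.mul measurable_snd) (measurable_fst.mul measurable_snd)
    constructor
    · exact (hind.integrable_mul (pair_int hXm hindep hInt i j k)
        (pair_int hXm hindep hInt i' j k')).congr
        (Filter.Eventually.of_forall fun ω => rfl)
    · rw [hind.integral_fun_mul_eq_mul_integral ((hXm _).mul (hXm _)).aestronglyMeasurable
          ((hXm _).mul (hXm _)).aestronglyMeasurable,
        pair_eval hXm hindep hM1 hM2 i j k, pair_eval hXm hindep hM1 hM2 i' j k']
      by_cases h1 : j = k <;> by_cases h2 : j = k' <;>
        simp [h1, h2, Ne.symm, eq_comm]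

end Key

end SketchAux

/-- Let `R` be a random `b × d` real matrix whose entries are
independent Gaussian random variables with mean `0` and variance `1/b`. Then for
every fixed `g ∈ ℝ^d`, `E[‖RᵀR g‖₂²] ≤ (1 + 3d/b) ‖g‖₂²`. -/
theorem expectation_sq_norm_gaussian_sketch (b d : ℕ) (hb : 0 < b)
    {Ω : Type*} [MeasureSpace Ω] [IsProbabilityMeasure (ℙ : Measure Ω)]
    (R : Ω → Matrix (Fin b) (Fin d) ℝ)
    (hmeas : ∀ (i : Fin b) (j : Fin d), Measurable fun ω => R ω i j)
    (hindep : iIndepFun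
      (fun (p : Fin b × Fin d) (ω : Ω) => R ω p.1 p.2) ℙ)
    (hdist : ∀ (i : Fin b) (j : Fin d),
      Measure.map (fun ω => R ω i j) ℙ = gaussianReal 0 ((b : NNReal))⁻¹)
    (g : Fin d → ℝ) :
    (∫ ω, ∑ j : Fin d, (((R ω)ᵀ * R ω).mulVec g j) ^ 2 ∂ℙ)
      ≤ (1 + 3 * d / b) * ∑ j : Fin d, (g j) ^ 2 := by
  classical
  set X : Fin b × Fin d → Ω → ℝ := fun p ω => R ω p.1 p.2 with hXdef
  have hXm : ∀ p : Fin b × Fin d, Measurable (X p) := fun p => hmeas p.1 p.2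
  have hbR : (0 : ℝ) < (b : ℝ) := by exact_mod_cast hb
  set v : ℝ≥0 := ((b : ℝ≥0))⁻¹ with hvdef
  have hv : v ≠ 0 := by
    rw [hvdef]
    simp only [ne_eq, inv_eq_zero]
    exact_mod_cast hb.ne'
  have hmap : ∀ p : Fin b × Fin d, Measure.map (X p) ℙ = gaussianReal 0 v :=
    fun p => hdist p.1 p.2
  set σ2 : ℝ := ((b : ℝ))⁻¹ with hs2
  have hvc : ((v : ℝ≥0) : ℝ) = σ2 := by
    rw [hvdef, hs2]
    push_cast
    rfl
  have hInt : ∀ (p : Fin b × Fin d) (n : ℕ), Integrable (fun ω => X p ω ^ n) ℙ :=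
    fun p n => integrable_pow_of_map (hXm p) hv (hmap p) n
  have hMom : ∀ (p : Fin b × Fin d) (n : ℕ),
      ∫ ω, X p ω ^ n ∂ℙ = ∫ x, x ^ n ∂(gaussianReal 0 v) :=
    fun p n => integral_pow_of_map (hXm p) hv (hmap p) n
  have hM1 : ∀ p, ∫ ω, X p ω ∂ℙ = 0 := fun p => by
    have := (hMom p 1).trans (integral_pow_one_gaussianReal hv)
    simpa using this
  have hM2 : ∀ p, ∫ ω, X p ω ^ 2 ∂ℙ = σ2 := fun p => by
    rw [hMom p 2, integral_pow_two_gaussianReal hv, hvc]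
  have hM3 : ∀ p, ∫ ω, X p ω ^ 3 ∂ℙ = 0 := fun p => by
    rw [hMom p 3, integral_pow_three_gaussianReal hv]
  have hM4 : ∀ p, ∫ ω, X p ω ^ 4 ∂ℙ = 3 * σ2 ^ 2 := fun p => by
    rw [hMom p 4, integral_pow_four_gaussianReal hv, hvc]
  have key := fun (i i' : Fin b) (j k k' : Fin d) =>
    key_lemma hXm hindep hInt hM1 hM2 hM3 hM4 i i' j k k'
  -- expand the integrand
  have expand : ∀ ω, ∑ j : Fin d, (((R ω)ᵀ * R ω).mulVec g j) ^ 2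
      = ∑ j : Fin d, ∑ p : Fin b × Fin d, ∑ q : Fin b × Fin d,
          (g p.2 * g q.2) * ((X (p.1, j) ω * X p ω) * (X (q.1, j) ω * X q ω)) := by
    intro ω
    refine Finset.sum_congr rfl fun j _ => ?_
    have h1 : ((R ω)ᵀ * R ω).mulVec g j
        = ∑ p : Fin b × Fin d, g p.2 * (X (p.1, j) ω * X p ω) := by
      calc ((R ω)ᵀ * R ω).mulVec g j
          = ∑ k : Fin d, (∑ i : Fin b, R ω i j * R ω i k) * g k := by
            simp [Matrix.mulVec, dotProduct, Matrix.mul_apply, Matrix.transpose_apply]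
        _ = ∑ k : Fin d, ∑ i : Fin b, g k * (R ω i j * R ω i k) := by
            refine Finset.sum_congr rfl fun k _ => ?_
            rw [Finset.sum_mul]
            exact Finset.sum_congr rfl fun i _ => by ring
        _ = ∑ i : Fin b, ∑ k : Fin d, g k * (R ω i j * R ω i k) := Finset.sum_comm
        _ = ∑ p : Fin b × Fin d, g p.2 * (X (p.1, j) ω * X p ω) := by
            rw [Fintype.sum_prod_type]
    rw [h1, sq, Finset.sum_mul_sum]
    refine Finset.sum_congr rfl fun p _ => Finset.sum_congr rfl fun q _ => by ring
  have hIntTerm : ∀ (j : Fin d) (p q : Fin b × Fin d),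
      Integrable (fun ω =>
        (g p.2 * g q.2) * ((X (p.1, j) ω * X p ω) * (X (q.1, j) ω * X q ω))) ℙ :=
    fun j p q => ((key p.1 q.1 j p.2 q.2).1).const_mul _
  have hswap : (∫ ω, ∑ j : Fin d, (((R ω)ᵀ * R ω).mulVec g j) ^ 2 ∂ℙ)
      = ∑ j : Fin d, ∑ p : Fin b × Fin d, ∑ q : Fin b × Fin d,
          (g p.2 * g q.2) * ∫ ω, (X (p.1, j) ω * X p ω) * (X (q.1, j) ω * X q ω) ∂ℙ := by
    rw [integral_congr_ae (Filter.Eventually.of_forall expand)]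
    rw [integral_finset_sum _ (fun j _ => integrable_finset_sum _
      (fun p _ => integrable_finset_sum _ (fun q _ => hIntTerm j p q)))]
    refine Finset.sum_congr rfl fun j _ => ?_
    rw [integral_finset_sum _ (fun p _ => integrable_finset_sum _ (fun q _ => hIntTerm j p q))]
    refine Finset.sum_congr rfl fun p _ => ?_
    rw [integral_finset_sum _ (fun q _ => hIntTerm j p q)]
    exact Finset.sum_congr rfl fun q _ => integral_const_mul _ _
  set G : ℝ := ∑ j : Fin d, (g j) ^ 2 with hG
  have hGnn : 0 ≤ G := Finset.sum_nonneg fun j _ => sq_nonneg _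
  have hval : (∫ ω, ∑ j : Fin d, (((R ω)ᵀ * R ω).mulVec g j) ^ 2 ∂ℙ)
      = σ2 ^ 2 * ((b : ℝ) * d + (b : ℝ) + (b : ℝ) ^ 2) * G := by
    rw [hswap]
    have hterm : ∀ (j : Fin d) (p q : Fin b × Fin d),
        (g p.2 * g q.2) * ∫ ω, (X (p.1, j) ω * X p ω) * (X (q.1, j) ω * X q ω) ∂ℙ
        = (g p.2 * g q.2) *
            (if p.1 = q.1 then
              (if p.2 = q.2 then (if p.2 = j then 3 * σ2 ^ 2 else σ2 ^ 2) else 0)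
            else (if p.2 = j then σ2 else 0) * (if q.2 = j then σ2 else 0)) := by
      intro j p q
      rw [(key p.1 q.1 j p.2 q.2).2]
    calc ∑ j : Fin d, ∑ p : Fin b × Fin d, ∑ q : Fin b × Fin d,
            (g p.2 * g q.2) * ∫ ω, (X (p.1, j) ω * X p ω) * (X (q.1, j) ω * X q ω) ∂ℙ
        = ∑ j : Fin d, ∑ i : Fin b, ∑ k : Fin d, ∑ i' : Fin b, ∑ k' : Fin d,
            (g k * g k') *
              (if i = i' then
                (if k = k' then (if k = j then 3 * σ2 ^ 2 else σ2 ^ 2) else 0)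
              else (if k = j then σ2 else 0) * (if k' = j then σ2 else 0)) := by
          refine Finset.sum_congr rfl fun j _ => ?_
          rw [Fintype.sum_prod_type]
          refine Finset.sum_congr rfl fun i _ => ?_
          refine Finset.sum_congr rfl fun k _ => ?_
          rw [Fintype.sum_prod_type]
          refine Finset.sum_congr rfl fun i' _ => Finset.sum_congr rfl fun k' _ => ?_
          exact hterm j (i, k) (i', k')
      _ = ∑ j : Fin d, ∑ i : Fin b, ∑ i' : Fin b,
            (if i = i' then σ2 ^ 2 * G + 2 * σ2 ^ 2 * (g j) ^ 2 else (σ2 * g j) ^ 2) := by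
          refine Finset.sum_congr rfl fun j _ => Finset.sum_congr rfl fun i _ => ?_
          rw [Finset.sum_comm]
          refine Finset.sum_congr rfl fun i' _ => ?_
          by_cases hii : i = i'
          · rw [if_pos hii]
            have hx : ∀ k : Fin d, (∑ k' : Fin d, (g k * g k') *
                (if i = i' then (if k = k' then (if k = j then 3 * σ2 ^ 2 else σ2 ^ 2) else 0)
                  else (if k = j then σ2 else 0) * (if k' = j then σ2 else 0)))
                = σ2 ^ 2 * (g k) ^ 2 + (if k = j then 2 * σ2 ^ 2 * (g k) ^ 2 else 0) := by
              intro k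
              simp only [if_pos hii]
              rw [Finset.sum_eq_single k]
              · by_cases hkj : k = j <;> simp [hkj] <;> ring
              · intro k' _ hne
                simp [Ne.symm hne]
              · intro h
                exact absurd (Finset.mem_univ k) h
            calc (∑ k : Fin d, ∑ k' : Fin d, (g k * g k') *
                  (if i = i' then (if k = k' then (if k = j then 3 * σ2 ^ 2 else σ2 ^ 2) else 0)
                    else (if k = j then σ2 else 0) * (if k' = j then σ2 else 0)))
                = ∑ k : Fin d,
                    (σ2 ^ 2 * (g k) ^ 2 + (if k = j then 2 * σ2 ^ 2 * (g k) ^ 2 else 0)) :=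
                  Finset.sum_congr rfl fun k _ => hx k
              _ = σ2 ^ 2 * G + 2 * σ2 ^ 2 * (g j) ^ 2 := by
                  rw [Finset.sum_add_distrib,
                    Finset.sum_ite_eq' Finset.univ j (fun k => 2 * σ2 ^ 2 * (g k) ^ 2),
                    ← Finset.mul_sum, ← hG]
                  simp
          · rw [if_neg hii]
            have h1 : (∑ k : Fin d, g k * (if k = j then σ2 else 0)) = σ2 * g j := by
              rw [Finset.sum_eq_single j]
              · simp [mul_comm]
              · intro k _ hne; simp [hne]
              · intro h; exact absurd (Finset.mem_univ j) h
            calc (∑ k : Fin d, ∑ k' : Fin d, (g k * g k') *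
                  (if i = i' then (if k = k' then (if k = j then 3 * σ2 ^ 2 else σ2 ^ 2) else 0)
                    else (if k = j then σ2 else 0) * (if k' = j then σ2 else 0)))
                = ∑ k : Fin d, ∑ k' : Fin d,
                    (g k * (if k = j then σ2 else 0)) * (g k' * (if k' = j then σ2 else 0)) := by
                  refine Finset.sum_congr rfl fun k _ => Finset.sum_congr rfl fun k' _ => ?_
                  rw [if_neg hii]
                  ring
              _ = (∑ k : Fin d, g k * (if k = j then σ2 else 0)) *
                    (∑ k' : Fin d, g k' * (if k' = j then σ2 else 0)) :=
                  (Finset.sum_mul_sum _ _ _ _).symm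
              _ = (σ2 * g j) ^ 2 := by
                  rw [sq]
                  exact congrArg₂ (· * ·) h1 h1
      _ = ∑ j : Fin d, ((b : ℝ) * (σ2 ^ 2 * G + 2 * σ2 ^ 2 * (g j) ^ 2)
            + ((b : ℝ) ^ 2 - (b : ℝ)) * (σ2 * g j) ^ 2) := by
          refine Finset.sum_congr rfl fun j _ => ?_
          set P : ℝ := σ2 ^ 2 * G + 2 * σ2 ^ 2 * (g j) ^ 2 with hP
          set Q : ℝ := (σ2 * g j) ^ 2 with hQ
          have hinner : ∀ i : Fin b, (∑ i' : Fin b, if i = i' then P else Q)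
              = P + ((b : ℝ) - 1) * Q := by
            intro i
            calc (∑ i' : Fin b, if i = i' then P else Q)
                = ∑ i' : Fin b, (Q + if i = i' then P - Q else 0) := by
                  refine Finset.sum_congr rfl fun i' _ => ?_
                  by_cases h : i = i' <;> simp [h]
              _ = (b : ℝ) * Q + (P - Q) := by
                  rw [Finset.sum_add_distrib, Finset.sum_const,
                    Finset.sum_ite_eq Finset.univ i (fun _ => P - Q)]
                  simp [Finset.card_univ, nsmul_eq_mul]
              _ = P + ((b : ℝ) - 1) * Q := by ring
          rw [Finset.sum_congr rfl fun i _ => hinner i, Finset.sum_const]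
          simp only [Finset.card_univ, Fintype.card_fin, nsmul_eq_mul]
          ring
      _ = σ2 ^ 2 * ((b : ℝ) * d + (b : ℝ) + (b : ℝ) ^ 2) * G := by
          calc (∑ j : Fin d, ((b : ℝ) * (σ2 ^ 2 * G + 2 * σ2 ^ 2 * (g j) ^ 2)
                + ((b : ℝ) ^ 2 - (b : ℝ)) * (σ2 * g j) ^ 2))
              = ∑ j : Fin d, ((b : ℝ) * σ2 ^ 2 * G
                + ((b : ℝ) * 2 * σ2 ^ 2 + ((b : ℝ) ^ 2 - (b : ℝ)) * σ2 ^ 2) * (g j) ^ 2) := by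
                refine Finset.sum_congr rfl fun j _ => ?_
                ring
            _ = (d : ℝ) * ((b : ℝ) * σ2 ^ 2 * G)
                + ((b : ℝ) * 2 * σ2 ^ 2 + ((b : ℝ) ^ 2 - (b : ℝ)) * σ2 ^ 2) * G := by
                rw [Finset.sum_add_distrib, Finset.sum_const, ← Finset.mul_sum, ← hG]
                simp [Finset.card_univ, nsmul_eq_mul]
            _ = σ2 ^ 2 * ((b : ℝ) * d + (b : ℝ) + (b : ℝ) ^ 2) * G := by ring
  rw [hval]
  rcases Nat.eq_zero_or_pos d with hd | hd
  · subst hd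
    have hG0 : G = 0 := by simp [hG]
    rw [hG0]
    simp
  · have h1d : (1 : ℝ) ≤ (d : ℝ) := by exact_mod_cast hd
    have hcoef : σ2 ^ 2 * ((b : ℝ) * d + (b : ℝ) + (b : ℝ) ^ 2) ≤ 1 + 3 * d / b := by
      have heq : σ2 ^ 2 * ((b : ℝ) * d + (b : ℝ) + (b : ℝ) ^ 2) = 1 + (1 + d) / b := by
        rw [hs2]
        field_simp
        ring
      rw [heq]
      have : (1 + (d : ℝ)) / b ≤ 3 * d / b := by
        gcongr
        linarith
      linarith
    exact mul_le_mul_of_nonneg_right hcoef hGnn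
end
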